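/- arXiv:1310.0887 — 3 statements merged into one kernel-verified Lean document; each statement's English description precedes it below -/
import Mathlib

section
/- Let Ω ⊆ ℝ^d be open, let β : ℝ^d → ℝ^d be continuously differentiable with div β(x) ≤ 0 for all x ∈ Ω, let ψ : ℝ^d → ℝ be continuously differentiable, let b₀ > 0 with ⟨β(x), ∇ψ(x)⟩ ≥ b₀ for all x ∈ Ω, let χ ≥ 0, and set φ(x) = exp(−ψ(x)) + χ. Then for every continuously differentiable u : ℝ^d → ℝ whose support is compact and contained in Ω, ∫_{ℝ^d} φ(x)·u(x)·⟨β(x), ∇u(x)⟩ dx ≥ (b₀/2)·∫_{ℝ^d} exp(−ψ(x))·u(x)² dx. -/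
open MeasureTheory
open scoped RealInnerProductSpace

/-- The divergence of a vector field on `ℝ^d`, defined as the trace of its
(Fréchet) derivative. -/
noncomputable def vecDiv {d : ℕ}
    (β : EuclideanSpace ℝ (Fin d) → EuclideanSpace ℝ (Fin d))
    (x : EuclideanSpace ℝ (Fin d)) : ℝ :=
  LinearMap.trace ℝ (EuclideanSpace ℝ (Fin d)) (fderiv ℝ β x : _ →ₗ[ℝ] _)

lemma wcc_clm_apply_eq_sum {d : ℕ} (L : EuclideanSpace ℝ (Fin d) →L[ℝ] ℝ)
    (v : EuclideanSpace ℝ (Fin d)) :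
    L v = ∑ i, v i * L (EuclideanSpace.single i 1) := by
  conv_lhs => rw [← (EuclideanSpace.basisFun (Fin d) ℝ).sum_repr v]
  rw [map_sum]
  simp [EuclideanSpace.basisFun_apply, EuclideanSpace.basisFun_repr, smul_eq_mul]

lemma wcc_vecDiv_eq_sum {d : ℕ} (β : EuclideanSpace ℝ (Fin d) → EuclideanSpace ℝ (Fin d))
    (x : EuclideanSpace ℝ (Fin d)) (hβ : DifferentiableAt ℝ β x) :
    vecDiv β x = ∑ i, fderiv ℝ (fun y => β y i) x (EuclideanSpace.single i 1) := by
  rw [vecDiv, LinearMap.trace_eq_matrix_trace ℝ (EuclideanSpace.basisFun (Fin d) ℝ).toBasis,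
    Matrix.trace]
  congr 1
  ext i
  have hproj : ∀ (v : EuclideanSpace ℝ (Fin d)),
      fderiv ℝ (fun y => β y i) x v = (fderiv ℝ β x v) i := by
    intro v
    have : fderiv ℝ (fun y => β y i) x
        = (EuclideanSpace.proj (𝕜 := ℝ) i).comp (fderiv ℝ β x) :=
      ((EuclideanSpace.proj (𝕜 := ℝ) i).hasFDerivAt.comp x hβ.hasFDerivAt).fderiv
    rw [this]; rfl
  rw [hproj]
  simp [Matrix.diag, LinearMap.toMatrix_apply, EuclideanSpace.basisFun_apply,
    EuclideanSpace.basisFun_repr]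

lemma wcc_ibp {d : ℕ} (β : EuclideanSpace ℝ (Fin d) → EuclideanSpace ℝ (Fin d))
    (hβ : ContDiff ℝ 1 β) (h : EuclideanSpace ℝ (Fin d) → ℝ)
    (hh : ContDiff ℝ 1 h) (hhc : HasCompactSupport h) :
    ∫ x, fderiv ℝ h x (β x) = - ∫ x, vecDiv β x * h x := by
  have hβd : Differentiable ℝ β := hβ.differentiable one_ne_zero
  have hhd : Differentiable ℝ h := hh.differentiable one_ne_zero
  have hβi : ∀ i, ContDiff ℝ 1 (fun y => β y i) := fun i =>
    (EuclideanSpace.proj (𝕜 := ℝ) i).contDiff.comp hβ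
  have hcont_fh : ∀ v, Continuous (fun x => fderiv ℝ h x v) := fun v =>
    (hh.continuous_fderiv one_ne_zero).clm_apply continuous_const
  have hcs_fh : ∀ v, HasCompactSupport (fun x => fderiv ℝ h x v) := fun v =>
    hhc.fderiv_apply ℝ v
  calc ∫ x, fderiv ℝ h x (β x)
      = ∫ x, ∑ i, β x i * fderiv ℝ h x (EuclideanSpace.single i 1) := by
        congr 1; funext x
        rw [wcc_clm_apply_eq_sum (fderiv ℝ h x) (β x)]
    _ = ∑ i, ∫ x, β x i * fderiv ℝ h x (EuclideanSpace.single i 1) := by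
        apply integral_finset_sum
        intro i _
        exact (((hβi i).continuous).mul (hcont_fh _)).integrable_of_hasCompactSupport
          ((hcs_fh _).mul_left)
    _ = ∑ i, -∫ x, fderiv ℝ (fun y => β y i) x (EuclideanSpace.single i 1) * h x := by
        refine Finset.sum_congr rfl fun i _ => ?_
        apply integral_mul_fderiv_eq_neg_fderiv_mul_of_integrable
        · exact ((((hβi i).continuous_fderiv one_ne_zero).clm_apply continuous_const).mul
            hh.continuous).integrable_of_hasCompactSupport hhc.mul_left
        · exact (((hβi i).continuous).mul (hcont_fh _)).integrable_of_hasCompactSupport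
            ((hcs_fh _).mul_left)
        · exact (((hβi i).continuous).mul hh.continuous).integrable_of_hasCompactSupport
            hhc.mul_left
        · exact fun x _ => (hβi i).differentiable one_ne_zero x
        · exact fun x _ => hhd x
    _ = - ∫ x, vecDiv β x * h x := by
        have hint : ∀ i : Fin d, Integrable
            (fun x => fderiv ℝ (fun y => β y i) x (EuclideanSpace.single i 1) * h x) :=
          fun i => ((((hβi i).continuous_fderiv one_ne_zero).clm_apply continuous_const).mul
            hh.continuous).integrable_of_hasCompactSupport hhc.mul_left
        rw [Finset.sum_neg_distrib, ← integral_finset_sum _ (fun i _ => hint i)]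
        refine congrArg Neg.neg (integral_congr_ae (Filter.Eventually.of_forall fun x => ?_))
        simp only []
        rw [wcc_vecDiv_eq_sum β x (hβd x), Finset.sum_mul]

/-- Weighted coercivity of the convection term: if `div β ≤ 0` on the open set `Ω`,
`⟨β, ∇ψ⟩ ≥ b₀ > 0` on `Ω`, `χ ≥ 0` and `φ = exp(−ψ) + χ`, then for every `C¹`
function `u` compactly supported in `Ω`,
`∫ φ·u·⟨β, ∇u⟩ ≥ (b₀/2)·∫ exp(−ψ)·u²`. -/
theorem weighted_convection_coercivity {d : ℕ}
    (Ω : Set (EuclideanSpace ℝ (Fin d))) (hΩ : IsOpen Ω)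
    (β : EuclideanSpace ℝ (Fin d) → EuclideanSpace ℝ (Fin d))
    (hβ : ContDiff ℝ 1 β) (hdivβ : ∀ x ∈ Ω, vecDiv β x ≤ 0)
    (ψ : EuclideanSpace ℝ (Fin d) → ℝ) (hψ : ContDiff ℝ 1 ψ)
    (b₀ : ℝ) (hb₀ : 0 < b₀)
    (hβψ : ∀ x ∈ Ω, b₀ ≤ ⟪β x, gradient ψ x⟫)
    (χ : ℝ) (hχ : 0 ≤ χ)
    (u : EuclideanSpace ℝ (Fin d) → ℝ) (hu : ContDiff ℝ 1 u)
    (hucs : HasCompactSupport u) (husupp : tsupport u ⊆ Ω) :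
    (b₀ / 2) * ∫ x, Real.exp (-ψ x) * (u x) ^ 2 ≤
      ∫ x, (Real.exp (-ψ x) + χ) * u x * ⟪β x, gradient u x⟫ := by
  have hinner : ∀ (f : EuclideanSpace ℝ (Fin d) → ℝ) (x v : EuclideanSpace ℝ (Fin d)),
      ⟪v, gradient f x⟫ = fderiv ℝ f x v := by
    intro f x v
    rw [real_inner_comm]
    exact InnerProductSpace.toDual_symm_apply
  set φ : EuclideanSpace ℝ (Fin d) → ℝ := fun y => Real.exp (-ψ y) + χ with hφdef
  have hφ : ContDiff ℝ 1 φ := (Real.contDiff_exp.comp hψ.neg).add contDiff_const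
  set h : EuclideanSpace ℝ (Fin d) → ℝ := fun y => φ y * (u y * u y) * 2⁻¹ with hhdef
  have hh : ContDiff ℝ 1 h := (hφ.mul (hu.mul hu)).mul contDiff_const
  have hhc : HasCompactSupport h := by
    apply hucs.mono
    intro x hx
    simp only [Function.mem_support, hhdef] at hx ⊢
    intro hux
    exact hx (by rw [hux]; ring)
  -- pointwise derivative identity
  have hkey : ∀ x, φ x * u x * fderiv ℝ u x (β x)
      = fderiv ℝ h x (β x) + (u x * u x) / 2 * Real.exp (-ψ x) * fderiv ℝ ψ x (β x) := by
    intro x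
    have hψx := (hψ.differentiable one_ne_zero x).hasFDerivAt
    have hux := (hu.differentiable one_ne_zero x).hasFDerivAt
    have hφx : HasFDerivAt φ (Real.exp (-ψ x) • (-fderiv ℝ ψ x)) x :=
      (hψx.neg).exp.add_const χ
    have huu : HasFDerivAt (fun y => u y * u y)
        (u x • fderiv ℝ u x + u x • fderiv ℝ u x) x := hux.mul hux
    have hhx : HasFDerivAt h ((2⁻¹ : ℝ) • (φ x • (u x • fderiv ℝ u x + u x • fderiv ℝ u x)
        + (u x * u x) • (Real.exp (-ψ x) • (-fderiv ℝ ψ x)))) x :=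
      (hφx.mul huu).mul_const (2⁻¹ : ℝ)
    rw [hhx.fderiv]
    simp only [ContinuousLinearMap.coe_smul', ContinuousLinearMap.add_apply,
      ContinuousLinearMap.smul_apply, ContinuousLinearMap.neg_apply, smul_eq_mul]
    ring
  -- integrability
  have huu_cs : HasCompactSupport (fun x => u x * u x) := hucs.mul_left
  have hint1 : Integrable (fun x => fderiv ℝ h x (β x)) := by
    apply Continuous.integrable_of_hasCompactSupport
    · exact (hh.continuous_fderiv one_ne_zero).clm_apply hβ.continuous
    · apply (hhc.fderiv ℝ).mono
      intro x hx
      simp only [Function.mem_support] at hx ⊢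
      intro h0
      exact hx (by rw [h0]; simp)
  have hcont2 : Continuous (fun x => (u x * u x) / 2 * Real.exp (-ψ x) * fderiv ℝ ψ x (β x)) := by
    exact (((hu.continuous.mul hu.continuous).div_const 2).mul
      ((Real.continuous_exp.comp hψ.continuous.neg))).mul
      ((hψ.continuous_fderiv one_ne_zero).clm_apply hβ.continuous)
  have hcs2 : HasCompactSupport
      (fun x => (u x * u x) / 2 * Real.exp (-ψ x) * fderiv ℝ ψ x (β x)) := by
    apply hucs.mono
    intro x hx
    simp only [Function.mem_support] at hx ⊢
    intro h0
    exact hx (by rw [h0]; ring)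
  have hint2 : Integrable (fun x => (u x * u x) / 2 * Real.exp (-ψ x) * fderiv ℝ ψ x (β x)) :=
    hcont2.integrable_of_hasCompactSupport hcs2
  have hintdiv : Integrable (fun x => -(vecDiv β x * h x)) := by
    apply Continuous.integrable_of_hasCompactSupport
    · have hvd : Continuous (vecDiv β) := by
        have heq : (vecDiv β)
            = fun x => ∑ i, fderiv ℝ (fun y => β y i) x (EuclideanSpace.single i 1) :=
          funext fun x => wcc_vecDiv_eq_sum β x (hβ.differentiable one_ne_zero x)
        rw [heq]
        exact continuous_finset_sum _ fun i _ =>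
          ((((EuclideanSpace.proj (𝕜 := ℝ) i).contDiff.comp hβ).continuous_fderiv
            one_ne_zero).clm_apply continuous_const)
      exact (hvd.mul hh.continuous).neg
    · apply hhc.mono
      intro x hx
      simp only [Function.mem_support] at hx ⊢
      intro h0
      exact hx (by rw [h0]; ring)
  -- main computation
  have hmain : ∫ x, φ x * u x * ⟪β x, gradient u x⟫
      = ∫ x, (-(vecDiv β x * h x)
          + (u x * u x) / 2 * Real.exp (-ψ x) * fderiv ℝ ψ x (β x)) := by
    have e1 : ∫ x, φ x * u x * ⟪β x, gradient u x⟫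
        = ∫ x, (fderiv ℝ h x (β x)
            + (u x * u x) / 2 * Real.exp (-ψ x) * fderiv ℝ ψ x (β x)) := by
      apply integral_congr_ae
      filter_upwards with x
      rw [hinner u x (β x), hkey x]
    rw [e1, integral_add hint1 hint2, wcc_ibp β hβ h hh hhc,
      ← integral_neg, ← integral_add hintdiv hint2]
  calc (b₀ / 2) * ∫ x, Real.exp (-ψ x) * (u x) ^ 2
      = ∫ x, (b₀ / 2) * (Real.exp (-ψ x) * (u x) ^ 2) := (integral_const_mul _ _).symm
    _ ≤ ∫ x, (-(vecDiv β x * h x)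
          + (u x * u x) / 2 * Real.exp (-ψ x) * fderiv ℝ ψ x (β x)) := by
        apply integral_mono
        · apply Continuous.integrable_of_hasCompactSupport
          · exact continuous_const.mul ((Real.continuous_exp.comp hψ.continuous.neg).mul
              (hu.continuous.pow 2))
          · apply hucs.mono
            intro x hx
            simp only [Function.mem_support] at hx ⊢
            intro h0
            exact hx (by rw [h0]; ring)
        · exact hintdiv.add hint2
        · intro x
          by_cases hx : x ∈ Ω
          · have h1 : 0 ≤ -(vecDiv β x * h x) := by
              have hφ0 : 0 ≤ φ x := add_nonneg (Real.exp_nonneg _) hχ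
              have hh0 : 0 ≤ h x := by
                show 0 ≤ φ x * (u x * u x) * 2⁻¹
                have := mul_self_nonneg (u x)
                positivity
              nlinarith [hdivβ x hx]
            have h2 : b₀ ≤ fderiv ℝ ψ x (β x) := by
              rw [← hinner ψ x (β x)]; exact hβψ x hx
            have h3 : (b₀ / 2) * (Real.exp (-ψ x) * (u x) ^ 2)
                ≤ (u x * u x) / 2 * Real.exp (-ψ x) * fderiv ℝ ψ x (β x) := by
              rw [pow_two]
              nlinarith [mul_nonneg (mul_nonneg (Real.exp_nonneg (-ψ x))
                (mul_self_nonneg (u x))) (sub_nonneg.mpr h2)]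
            linarith
          · have hu0 : u x = 0 := image_eq_zero_of_notMem_tsupport (fun hmem => hx (husupp hmem))
            have hh0 : h x = 0 := by simp [hhdef, hu0]
            simp [hu0, hh0]
    _ = ∫ x, φ x * u x * ⟪β x, gradient u x⟫ := hmain.symm
end

section
/- Let Ω ⊆ ℝ^d be open, let β : ℝ^d → ℝ^d be continuously differentiable with div β(x) ≤ 0 for all x ∈ Ω, let ψ : ℝ^d → ℝ be continuously differentiable, and let b₀ > 0, M ≥ 0, E ≥ 0 be constants with ⟨β(x), ∇ψ(x)⟩ ≥ b₀, ‖∇ψ(x)‖ ≤ M, and exp(−ψ(x)) ≤ E for all x ∈ Ω. Let χ ≥ 1 + 2·b₀⁻¹·E·M² and set φ(x) = exp(−ψ(x)) + χ. Then for every ε with 0 < ε ≤ 1 and every twice continuously differentiable u : ℝ^d → ℝ whose support is compact and contained in Ω, ∫_{ℝ^d} φ(x)·u(x)·( −ε·Δu(x) + ⟨β(x), ∇u(x)⟩ ) dx ≥ (χ/2)·ε·∫_{ℝ^d} ‖∇u(x)‖² dx + (b₀/4)·∫_{ℝ^d} exp(−ψ(x))·u(x)² dx. -/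
open MeasureTheory
open scoped RealInnerProductSpace

/-- The Laplacian `Δu = div (∇u)`. -/
noncomputable def lap {d : ℕ} (u : EuclideanSpace ℝ (Fin d) → ℝ)
    (x : EuclideanSpace ℝ (Fin d)) : ℝ :=
  vecDiv (fun y => gradient u y) x

section Aux
variable {d : ℕ}

local notation "𝔼" => EuclideanSpace ℝ (Fin d)

noncomputable def evec (i : Fin d) : EuclideanSpace ℝ (Fin d) := EuclideanSpace.single i 1

lemma trace_eq_sum_coord (T : 𝔼 →L[ℝ] 𝔼) :
    LinearMap.trace ℝ 𝔼 (T : 𝔼 →ₗ[ℝ] 𝔼) = ∑ i, T (evec i) i := by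
  rw [LinearMap.trace_eq_matrix_trace ℝ (EuclideanSpace.basisFun (Fin d) ℝ).toBasis]
  rw [Matrix.trace]
  refine Finset.sum_congr rfl fun i _ => ?_
  rw [Matrix.diag_apply, LinearMap.toMatrix_apply]
  simp [evec, EuclideanSpace.basisFun_repr, OrthonormalBasis.coe_toBasis,
    EuclideanSpace.basisFun_apply]

lemma gradient_coord (f : 𝔼 → ℝ) (x : 𝔼) (i : Fin d) :
    gradient f x i = fderiv ℝ f x (evec i) := by
  have : gradient f x i = ⟪evec i, gradient f x⟫ := by
    simp only [evec, EuclideanSpace.inner_single_left, map_one, one_mul]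
  rw [this, real_inner_comm, gradient, InnerProductSpace.toDual_symm_apply]

lemma inner_gradient (f : 𝔼 → ℝ) (x : 𝔼) (w : 𝔼) :
    ⟪w, gradient f x⟫ = fderiv ℝ f x w := by
  rw [real_inner_comm, gradient, InnerProductSpace.toDual_symm_apply]

lemma coord_fderiv {V : 𝔼 → 𝔼} {x : 𝔼} (hV : DifferentiableAt ℝ V x) (v : 𝔼) (i : Fin d) :
    fderiv ℝ (fun y => V y i) x v = fderiv ℝ V x v i := by
  have h : HasFDerivAt (fun y => V y i)
      ((EuclideanSpace.proj (𝕜 := ℝ) i).comp (fderiv ℝ V x)) x := by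
    exact
      ((EuclideanSpace.proj (𝕜 := ℝ) i).hasFDerivAt.comp x hV.hasFDerivAt)
  rw [h.fderiv]
  simp

lemma vecDiv_eq_sum {V : 𝔼 → 𝔼} {x : 𝔼} (hV : DifferentiableAt ℝ V x) :
    vecDiv V x = ∑ i, fderiv ℝ (fun y => V y i) x (evec i) := by
  rw [vecDiv, trace_eq_sum_coord]
  exact Finset.sum_congr rfl fun i _ => (coord_fderiv hV (evec i) i).symm

lemma contDiff_gradient {u : 𝔼 → ℝ} (hu : ContDiff ℝ 2 u) : ContDiff ℝ 1 (gradient u) := by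
  have hDu : ContDiff ℝ 1 (fderiv ℝ u) := hu.fderiv_right (by norm_num)
  have : gradient u = fun x => (InnerProductSpace.toDual ℝ 𝔼).symm (fderiv ℝ u x) := rfl
  rw [this]
  exact ((InnerProductSpace.toDual ℝ 𝔼).symm.toContinuousLinearEquiv.toContinuousLinearMap).contDiff.comp hDu

lemma lap_eq_sum {u : 𝔼 → ℝ} (hu : ContDiff ℝ 2 u) (x : 𝔼) :
    lap u x = ∑ i, fderiv ℝ (fun y => fderiv ℝ u y (evec i)) x (evec i) := by
  have hgrad : DifferentiableAt ℝ (gradient u) x :=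
    ((contDiff_gradient hu).differentiable one_ne_zero) x
  rw [lap, vecDiv_eq_sum hgrad]
  refine Finset.sum_congr rfl fun i _ => ?_
  have h : (fun y => gradient u y i) = (fun y => fderiv ℝ u y (evec i)) :=
    funext fun y => gradient_coord u y i
  rw [h]

lemma inner_eval (a b : 𝔼) : ⟪a, b⟫ = ∑ i, a i * b i := by
  rw [PiLp.inner_apply]; simp [RCLike.inner_apply, mul_comm]

lemma norm_sq_eval (b : 𝔼) : ‖b‖ ^ 2 = ∑ i, b i ^ 2 := by
  rw [← real_inner_self_eq_norm_sq, inner_eval]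
  exact Finset.sum_congr rfl fun i _ => (sq (b i)).symm

lemma fderiv_weight {ψ : 𝔼 → ℝ} (hψ : ContDiff ℝ 1 ψ) (χ : ℝ) (x v : 𝔼) :
    fderiv ℝ (fun y => Real.exp (-ψ y) + χ) x v
      = -(Real.exp (-ψ x) * fderiv ℝ ψ x v) := by
  have hψx := ((hψ.differentiable one_ne_zero) x).hasFDerivAt
  have hexp : HasFDerivAt (fun y => Real.exp (-ψ y))
      (Real.exp (-ψ x) • (-fderiv ℝ ψ x)) x := hψx.neg.exp
  have hadd := hexp.add_const χ
  rw [hadd.fderiv]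
  simp [mul_comm]

lemma fderiv_zero_of_nmem {u : 𝔼 → ℝ} {x : 𝔼} (hx : x ∉ tsupport u) :
    fderiv ℝ u x = 0 := by
  by_contra h
  exact hx (support_fderiv_subset ℝ (Function.mem_support.2 h))

lemma gradient_zero_of_nmem {u : 𝔼 → ℝ} {x : 𝔼} (hx : x ∉ tsupport u) :
    gradient u x = 0 := by
  rw [gradient, fderiv_zero_of_nmem hx]; simp

lemma integrable_aux {u : 𝔼 → ℝ} (hucs : HasCompactSupport u) {f : 𝔼 → ℝ}
    (hf : Continuous f) (h0 : ∀ x, x ∉ tsupport u → f x = 0) :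
    Integrable f (volume : Measure 𝔼) :=
  hf.integrable_of_hasCompactSupport (HasCompactSupport.intro hucs h0)

lemma cont_fderiv_apply {f : 𝔼 → ℝ} (hf : ContDiff ℝ 1 f) (v : 𝔼) :
    Continuous fun x => fderiv ℝ f x v :=
  (hf.continuous_fderiv one_ne_zero).clm_apply continuous_const

lemma cont_vecDiv {β : 𝔼 → 𝔼} (hβ : ContDiff ℝ 1 β) : Continuous (vecDiv β) := by
  have h : vecDiv β = fun x => ∑ i, fderiv ℝ β x (evec i) i := by
    funext x
    rw [vecDiv, trace_eq_sum_coord]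
  rw [h]
  exact continuous_finset_sum _ fun i _ =>
    (EuclideanSpace.proj (𝕜 := ℝ) i).continuous.comp
      ((hβ.continuous_fderiv one_ne_zero).clm_apply continuous_const)

end Aux


lemma pointwise_bound (a N U P B D ε χ M E b₀ : ℝ)
    (ha : 0 < a) (haE : a ≤ E) (hB' : b₀ ≤ B) (hD' : D ≤ 0) (hN0 : 0 ≤ N)
    (hUP1 : U * P ≤ |U| * (M * N))
    (hb₀ : 0 < b₀) (hχ0 : 0 < χ)
    (hEM : b₀ + 2 * E * M ^ 2 ≤ b₀ * χ)
    (hε0 : 0 < ε) (hε1 : ε ≤ 1) :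
    (χ / 2) * ε * N ^ 2 + (b₀ / 4) * (a * U ^ 2) ≤
      ε * ((a + χ) * N ^ 2 - a * U * P) + (U ^ 2 / 2) * (a * B - (a + χ) * D) := by
  have hq : 2 * χ * (a * M * |U| * N) ≤ χ ^ 2 * N ^ 2 + a ^ 2 * M ^ 2 * |U| ^ 2 := by
    nlinarith [sq_nonneg (χ * N - a * M * |U|)]
  rw [sq_abs] at hq
  have hii : 2 * χ * (ε * (a * M * |U| * N))
      ≤ ε * (χ ^ 2 * N ^ 2) + ε * (a ^ 2 * M ^ 2 * U ^ 2) := by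
    nlinarith [mul_le_mul_of_nonneg_left hq hε0.le]
  have hiii : ε * (a ^ 2 * M ^ 2 * U ^ 2) ≤ (b₀ * χ / 2) * (a * U ^ 2) := by
    have h4 : a ^ 2 * M ^ 2 * U ^ 2 ≤ E * M ^ 2 * (a * U ^ 2) := by
      nlinarith [mul_nonneg (mul_nonneg ha.le (sq_nonneg M)) (sq_nonneg U)]
    have h5 : E * M ^ 2 ≤ b₀ * χ / 2 := by nlinarith
    nlinarith [h4, hε1, (by positivity : (0:ℝ) ≤ a ^ 2 * M ^ 2 * U ^ 2),
      mul_le_mul_of_nonneg_right h5 (mul_nonneg ha.le (sq_nonneg U))]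
  have h6 : 2 * χ * (ε * (a * M * |U| * N))
      ≤ 2 * χ * (ε * (χ / 2) * N ^ 2 + (b₀ / 4) * (a * U ^ 2)) := by
    nlinarith [hii, hiii]
  have hcross : ε * (a * M * |U| * N) ≤ ε * (χ / 2) * N ^ 2 + (b₀ / 4) * (a * U ^ 2) :=
    le_of_mul_le_mul_left h6 (by positivity)
  have h7 : ε * (a * (U * P)) ≤ ε * (a * (|U| * (M * N))) :=
    mul_le_mul_of_nonneg_left (mul_le_mul_of_nonneg_left hUP1 ha.le) hε0.le
  have h8 : (U ^ 2 / 2) * (a * b₀) ≤ (U ^ 2 / 2) * (a * B) :=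
    mul_le_mul_of_nonneg_left (mul_le_mul_of_nonneg_left hB' ha.le) (by positivity)
  have h9 : 0 ≤ (U ^ 2 / 2) * (-((a + χ) * D)) := by
    apply mul_nonneg (by positivity)
    nlinarith
  have h10 : 0 ≤ ε * (a * N ^ 2) :=
    mul_nonneg hε0.le (mul_nonneg ha.le (sq_nonneg N))
  linarith [hcross, h7, h8, h9, h10]

/-- ε-uniform weighted coercivity of the convection–diffusion operator `−εΔ + β·∇`:
under the standing assumptions `div β ≤ 0`, `⟨β, ∇ψ⟩ ≥ b₀ > 0`, `‖∇ψ‖ ≤ M`,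
`exp(−ψ) ≤ E` on `Ω`, and with `χ ≥ 1 + 2·b₀⁻¹·E·M²`, `φ = exp(−ψ) + χ`,
for every `0 < ε ≤ 1` and every `C²` function `u` compactly supported in `Ω`,
`∫ φ·u·(−ε·Δu + ⟨β, ∇u⟩) ≥ (χ/2)·ε·∫ ‖∇u‖² + (b₀/4)·∫ exp(−ψ)·u²`. -/
theorem weighted_convection_diffusion_coercivity {d : ℕ}
    (Ω : Set (EuclideanSpace ℝ (Fin d))) (hΩ : IsOpen Ω)
    (β : EuclideanSpace ℝ (Fin d) → EuclideanSpace ℝ (Fin d))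
    (hβ : ContDiff ℝ 1 β) (hdivβ : ∀ x ∈ Ω, vecDiv β x ≤ 0)
    (ψ : EuclideanSpace ℝ (Fin d) → ℝ) (hψ : ContDiff ℝ 1 ψ)
    (b₀ M E : ℝ) (hb₀ : 0 < b₀) (hM : 0 ≤ M) (hE : 0 ≤ E)
    (hβψ : ∀ x ∈ Ω, b₀ ≤ ⟪β x, gradient ψ x⟫)
    (hψM : ∀ x ∈ Ω, ‖gradient ψ x‖ ≤ M)
    (hψE : ∀ x ∈ Ω, Real.exp (-ψ x) ≤ E)
    (χ : ℝ) (hχ : 1 + 2 * b₀⁻¹ * E * M ^ 2 ≤ χ)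
    (ε : ℝ) (hε0 : 0 < ε) (hε1 : ε ≤ 1)
    (u : EuclideanSpace ℝ (Fin d) → ℝ) (hu : ContDiff ℝ 2 u)
    (hucs : HasCompactSupport u) (husupp : tsupport u ⊆ Ω) :
    (χ / 2) * ε * (∫ x, ‖gradient u x‖ ^ 2)
      + (b₀ / 4) * ∫ x, Real.exp (-ψ x) * (u x) ^ 2 ≤
    ∫ x, (Real.exp (-ψ x) + χ) * u x * (-ε * lap u x + ⟪β x, gradient u x⟫) := by
  classical
  have hχ1 : 1 ≤ χ := by nlinarith [mul_nonneg (mul_nonneg (by positivity : (0:ℝ) ≤ 2 * b₀⁻¹) hE) (sq_nonneg M)]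
  have hχ0 : (0:ℝ) < χ := by linarith
  -- continuity / differentiability package
  have hu1 : ContDiff ℝ 1 u := hu.of_le (by norm_num)
  have hud : Differentiable ℝ u := hu1.differentiable one_ne_zero
  have hφc : ContDiff ℝ 1 (fun y : EuclideanSpace ℝ (Fin d) => Real.exp (-ψ y) + χ) :=
    (hψ.neg.exp).add contDiff_const
  have hφd : Differentiable ℝ (fun y : EuclideanSpace ℝ (Fin d) => Real.exp (-ψ y) + χ) :=
    hφc.differentiable one_ne_zero
  have hDgc : ∀ i : Fin d, ContDiff ℝ 1 (fun y => fderiv ℝ u y (evec i)) :=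
    fun i => (hu.fderiv_right (by norm_num)).clm_apply contDiff_const
  have hβic : ∀ i : Fin d, ContDiff ℝ 1 (fun y => β y i) :=
    fun i => (EuclideanSpace.proj (𝕜 := ℝ) i).contDiff.comp hβ
  have hgu : Continuous (gradient u) := (contDiff_gradient hu).continuous
  have hgψ : Continuous (gradient ψ) := by
    have : gradient ψ = fun x => (InnerProductSpace.toDual ℝ (EuclideanSpace ℝ (Fin d))).symm
        (fderiv ℝ ψ x) := rfl
    rw [this]
    exact (InnerProductSpace.toDual ℝ _).symm.continuous.comp (hψ.continuous_fderiv one_ne_zero)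
  have hec : Continuous (fun x : EuclideanSpace ℝ (Fin d) => Real.exp (-ψ x)) :=
    Real.continuous_exp.comp (hψ.continuous.neg)
  have hφcc : Continuous (fun x : EuclideanSpace ℝ (Fin d) => Real.exp (-ψ x) + χ) :=
    hec.add continuous_const
  -- support helpers
  have h0 : ∀ {x}, x ∉ tsupport u → u x = 0 := fun hx => image_eq_zero_of_notMem_tsupport hx
  have h0g : ∀ (i : Fin d) {x}, x ∉ tsupport u → fderiv ℝ u x (evec i) = 0 := by
    intro i x hx; rw [fderiv_zero_of_nmem hx]; rfl
  have key : ∀ f : EuclideanSpace ℝ (Fin d) → ℝ, Continuous f →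
      (∀ x, x ∉ tsupport u → f x = 0) → Integrable f volume :=
    fun f hf hf0 => integrable_aux hucs hf hf0
  -- pointwise product rule for the weight times u
  have hprod : ∀ (x : EuclideanSpace ℝ (Fin d)) (i : Fin d),
      fderiv ℝ (fun y => (Real.exp (-ψ y) + χ) * u y) x (evec i)
        = -(Real.exp (-ψ x) * fderiv ℝ ψ x (evec i)) * u x
          + (Real.exp (-ψ x) + χ) * fderiv ℝ u x (evec i) := by
    intro x i
    rw [fderiv_fun_mul (hφd x) (hud x)]
    simp only [ContinuousLinearMap.add_apply, ContinuousLinearMap.smul_apply, smul_eq_mul]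
    rw [fderiv_weight hψ χ x (evec i)]
    ring
  -- integration by parts, diffusion part
  have hIBP1 : ∀ i : Fin d,
      ∫ x, ((Real.exp (-ψ x) + χ) * u x) * fderiv ℝ (fun y => fderiv ℝ u y (evec i)) x (evec i)
        = - ∫ x, fderiv ℝ (fun y => (Real.exp (-ψ y) + χ) * u y) x (evec i)
            * fderiv ℝ u x (evec i) := by
    intro i
    apply integral_mul_fderiv_eq_neg_fderiv_mul_of_integrable
    · exact key _ ((cont_fderiv_apply (hφc.mul hu1) _).mul (hDgc i).continuous)
        (fun x hx => by rw [h0g i hx, mul_zero])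
    · exact key _ ((hφcc.mul hu1.continuous).mul (cont_fderiv_apply (hDgc i) _))
        (fun x hx => by rw [h0 hx, mul_zero, zero_mul])
    · exact key _ ((hφcc.mul hu1.continuous).mul (hDgc i).continuous)
        (fun x hx => by rw [h0 hx, mul_zero, zero_mul])
    · exact fun x _ => ((hφc.mul hu1).differentiable one_ne_zero) x
    · exact fun x _ => ((hDgc i).differentiable one_ne_zero) x
  have hI1 : ∫ x, (Real.exp (-ψ x) + χ) * u x * lap u x
      = - ∫ x, ((Real.exp (-ψ x) + χ) * ‖gradient u x‖ ^ 2
          - Real.exp (-ψ x) * u x * ⟪gradient ψ x, gradient u x⟫) := by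
    have e1 : (fun x => (Real.exp (-ψ x) + χ) * u x * lap u x)
        = fun x => ∑ i : Fin d, ((Real.exp (-ψ x) + χ) * u x)
            * fderiv ℝ (fun y => fderiv ℝ u y (evec i)) x (evec i) := by
      funext x
      rw [lap_eq_sum hu x, Finset.mul_sum]
    rw [e1, integral_finset_sum _ (fun i _ =>
      key _ ((hφcc.fun_mul hu1.continuous).fun_mul (cont_fderiv_apply (hDgc i) _))
        (fun x hx => by rw [h0 hx, mul_zero, zero_mul]))]
    calc ∑ i : Fin d, ∫ x, ((Real.exp (-ψ x) + χ) * u x)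
            * fderiv ℝ (fun y => fderiv ℝ u y (evec i)) x (evec i)
        = ∑ i : Fin d, - ∫ x, fderiv ℝ (fun y => (Real.exp (-ψ y) + χ) * u y) x (evec i)
            * fderiv ℝ u x (evec i) := Finset.sum_congr rfl fun i _ => hIBP1 i
      _ = - ∑ i : Fin d, ∫ x, fderiv ℝ (fun y => (Real.exp (-ψ y) + χ) * u y) x (evec i)
            * fderiv ℝ u x (evec i) := by rw [Finset.sum_neg_distrib]
      _ = - ∫ x, ∑ i : Fin d, fderiv ℝ (fun y => (Real.exp (-ψ y) + χ) * u y) x (evec i)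
            * fderiv ℝ u x (evec i) := by
          rw [integral_finset_sum _ (fun i _ =>
            key _ ((cont_fderiv_apply (hφc.mul hu1) _).fun_mul (hDgc i).continuous)
              (fun x hx => by rw [h0g i hx, mul_zero]))]
      _ = - ∫ x, ((Real.exp (-ψ x) + χ) * ‖gradient u x‖ ^ 2
            - Real.exp (-ψ x) * u x * ⟪gradient ψ x, gradient u x⟫) := by
          congr 1
          refine integral_congr_ae (Filter.EventuallyEq.of_eq (funext fun x => ?_))
          calc ∑ i : Fin d, fderiv ℝ (fun y => (Real.exp (-ψ y) + χ) * u y) x (evec i)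
                * fderiv ℝ u x (evec i)
              = ∑ i : Fin d, ((Real.exp (-ψ x) + χ) * (fderiv ℝ u x (evec i)) ^ 2
                - Real.exp (-ψ x) * u x * (fderiv ℝ ψ x (evec i) * fderiv ℝ u x (evec i))) := by
                refine Finset.sum_congr rfl fun i _ => ?_
                rw [hprod x i]; ring
            _ = (Real.exp (-ψ x) + χ) * ‖gradient u x‖ ^ 2
                - Real.exp (-ψ x) * u x * ⟪gradient ψ x, gradient u x⟫ := by
                rw [Finset.sum_sub_distrib, ← Finset.mul_sum, ← Finset.mul_sum,
                  norm_sq_eval, inner_eval]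
                simp only [gradient_coord]
  -- square function facts
  have hu21 : ContDiff ℝ 1 (fun y => u y ^ 2 / 2) := by
    have h := (hu1.mul hu1).div_const 2
    have e : (fun y => u y * u y / 2) = fun y => u y ^ 2 / 2 := by
      funext y; rw [pow_two]
    rwa [e] at h
  have hsq : ∀ (x : EuclideanSpace ℝ (Fin d)) (i : Fin d),
      fderiv ℝ (fun y => u y ^ 2 / 2) x (evec i) = u x * fderiv ℝ u x (evec i) := by
    intro x i
    have h' : HasFDerivAt (fun y => u y ^ 2 / 2) (u x • fderiv ℝ u x) x := by
      have h := ((hud x).hasFDerivAt.fun_mul (hud x).hasFDerivAt).fun_const_smul ((2:ℝ)⁻¹)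
      have e1 : (fun y => (2:ℝ)⁻¹ • (u y * u y)) = fun y => u y ^ 2 / 2 := by
        funext y; simp only [smul_eq_mul, pow_two]; ring
      have e2 : ((2:ℝ)⁻¹ • (u x • fderiv ℝ u x + u x • fderiv ℝ u x)) = u x • fderiv ℝ u x := by
        ext w
        simp only [ContinuousLinearMap.smul_apply, ContinuousLinearMap.add_apply, smul_eq_mul]
        ring
      rw [e1, e2] at h
      exact h
    rw [h'.fderiv]
    simp
  have hprod2 : ∀ (x : EuclideanSpace ℝ (Fin d)) (i : Fin d),
      fderiv ℝ (fun y => (Real.exp (-ψ y) + χ) * β y i) x (evec i)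
        = -(Real.exp (-ψ x) * fderiv ℝ ψ x (evec i)) * β x i
          + (Real.exp (-ψ x) + χ) * fderiv ℝ (fun y => β y i) x (evec i) := by
    intro x i
    rw [fderiv_fun_mul (hφd x) (((hβic i).differentiable one_ne_zero) x)]
    simp only [ContinuousLinearMap.add_apply, ContinuousLinearMap.smul_apply, smul_eq_mul]
    rw [fderiv_weight hψ χ x (evec i)]
    ring
  have hIBP2 : ∀ i : Fin d,
      ∫ x, ((Real.exp (-ψ x) + χ) * β x i) * fderiv ℝ (fun y => u y ^ 2 / 2) x (evec i)
        = - ∫ x, fderiv ℝ (fun y => (Real.exp (-ψ y) + χ) * β y i) x (evec i)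
            * (u x ^ 2 / 2) := by
    intro i
    apply integral_mul_fderiv_eq_neg_fderiv_mul_of_integrable
    · exact key _ ((cont_fderiv_apply (hφc.mul (hβic i)) _).mul
        ((hu1.continuous.pow 2).div_const 2))
        (fun x hx => by rw [h0 hx]; ring)
    · exact key _ ((hφcc.mul (hβic i).continuous).mul (cont_fderiv_apply hu21 _))
        (fun x hx => by rw [hsq x i, h0 hx, zero_mul, mul_zero])
    · exact key _ ((hφcc.mul (hβic i).continuous).mul ((hu1.continuous.pow 2).div_const 2))
        (fun x hx => by rw [h0 hx]; ring)
    · exact fun x _ => ((hφc.mul (hβic i)).differentiable one_ne_zero) x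
    · exact fun x _ => (hu21.differentiable one_ne_zero) x
  have hI2 : ∫ x, (Real.exp (-ψ x) + χ) * u x * ⟪β x, gradient u x⟫
      = ∫ x, (u x ^ 2 / 2) * (Real.exp (-ψ x) * ⟪β x, gradient ψ x⟫
          - (Real.exp (-ψ x) + χ) * vecDiv β x) := by
    have e1 : (fun x => (Real.exp (-ψ x) + χ) * u x * ⟪β x, gradient u x⟫)
        = fun x => ∑ i : Fin d, ((Real.exp (-ψ x) + χ) * β x i)
            * fderiv ℝ (fun y => u y ^ 2 / 2) x (evec i) := by
      funext x
      rw [inner_eval, Finset.mul_sum]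
      refine Finset.sum_congr rfl fun i _ => ?_
      rw [hsq x i, gradient_coord]
      ring
    rw [e1, integral_finset_sum _ (fun i _ =>
      key _ ((hφcc.fun_mul (hβic i).continuous).fun_mul (cont_fderiv_apply hu21 _))
        (fun x hx => by rw [hsq x i, h0 hx, zero_mul, mul_zero]))]
    calc ∑ i : Fin d, ∫ x, ((Real.exp (-ψ x) + χ) * β x i)
            * fderiv ℝ (fun y => u y ^ 2 / 2) x (evec i)
        = ∑ i : Fin d, - ∫ x, fderiv ℝ (fun y => (Real.exp (-ψ y) + χ) * β y i) x (evec i)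
            * (u x ^ 2 / 2) := Finset.sum_congr rfl fun i _ => hIBP2 i
      _ = - ∑ i : Fin d, ∫ x, fderiv ℝ (fun y => (Real.exp (-ψ y) + χ) * β y i) x (evec i)
            * (u x ^ 2 / 2) := by rw [Finset.sum_neg_distrib]
      _ = - ∫ x, ∑ i : Fin d, fderiv ℝ (fun y => (Real.exp (-ψ y) + χ) * β y i) x (evec i)
            * (u x ^ 2 / 2) := by
          rw [integral_finset_sum _ (fun i _ =>
            key _ ((cont_fderiv_apply (hφc.mul (hβic i)) _).fun_mul
              ((hu1.continuous.fun_pow 2).div_const 2))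
              (fun x hx => by rw [h0 hx]; ring))]
      _ = ∫ x, (u x ^ 2 / 2) * (Real.exp (-ψ x) * ⟪β x, gradient ψ x⟫
            - (Real.exp (-ψ x) + χ) * vecDiv β x) := by
          rw [← integral_neg]
          refine integral_congr_ae (Filter.EventuallyEq.of_eq (funext fun x => ?_))
          calc -(∑ i : Fin d, fderiv ℝ (fun y => (Real.exp (-ψ y) + χ) * β y i) x (evec i)
                * (u x ^ 2 / 2))
              = -((∑ i : Fin d, (-(Real.exp (-ψ x) * fderiv ℝ ψ x (evec i)) * β x i
                  + (Real.exp (-ψ x) + χ) * fderiv ℝ (fun y => β y i) x (evec i)))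
                  * (u x ^ 2 / 2)) := by
                rw [← Finset.sum_mul]
                congr 1
                exact congrArg (· * (u x ^ 2 / 2))
                  (Finset.sum_congr rfl fun i _ => hprod2 x i)
            _ = (u x ^ 2 / 2) * (Real.exp (-ψ x) * ⟪β x, gradient ψ x⟫
                - (Real.exp (-ψ x) + χ) * vecDiv β x) := by
                have hv : vecDiv β x = ∑ i : Fin d, fderiv ℝ (fun y => β y i) x (evec i) :=
                  vecDiv_eq_sum ((hβ.differentiable one_ne_zero) x)
                have hbψ : ⟪β x, gradient ψ x⟫
                    = ∑ i : Fin d, β x i * fderiv ℝ ψ x (evec i) := by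
                  rw [inner_eval]; simp only [gradient_coord]
                rw [hv, hbψ, Finset.sum_add_distrib, ← Finset.mul_sum]
                rw [show ∑ i : Fin d, -(Real.exp (-ψ x) * fderiv ℝ ψ x (evec i)) * β x i
                    = -(Real.exp (-ψ x) * ∑ i : Fin d, β x i * fderiv ℝ ψ x (evec i)) by
                  rw [Finset.mul_sum, ← Finset.sum_neg_distrib]
                  exact Finset.sum_congr rfl fun i _ => by ring]
                ring
  -- integrability of the main pieces
  have hclap : Continuous (lap u) := by
    have e : lap u = fun x => ∑ i : Fin d,
        fderiv ℝ (fun y => fderiv ℝ u y (evec i)) x (evec i) := funext (lap_eq_sum hu)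
    rw [e]
    exact continuous_finset_sum _ fun i _ => cont_fderiv_apply (hDgc i) _
  have hintlap : Integrable (fun x => (Real.exp (-ψ x) + χ) * u x * lap u x) volume :=
    key _ ((hφcc.mul hu1.continuous).mul hclap) (fun x hx => by rw [h0 hx]; ring)
  have hintconv : Integrable
      (fun x => (Real.exp (-ψ x) + χ) * u x * ⟪β x, gradient u x⟫) volume :=
    key _ ((hφcc.mul hu1.continuous).mul (hβ.continuous.inner hgu))
      (fun x hx => by rw [h0 hx]; ring)
  have hintP1 : Integrable (fun x => (Real.exp (-ψ x) + χ) * ‖gradient u x‖ ^ 2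
      - Real.exp (-ψ x) * u x * ⟪gradient ψ x, gradient u x⟫) volume :=
    key _ ((hφcc.mul (hgu.norm.pow 2)).sub
        ((hec.mul hu1.continuous).mul (hgψ.inner hgu)))
      (fun x hx => by rw [h0 hx, gradient_zero_of_nmem hx]; simp)
  have hintP2 : Integrable (fun x => (u x ^ 2 / 2) * (Real.exp (-ψ x) * ⟪β x, gradient ψ x⟫
      - (Real.exp (-ψ x) + χ) * vecDiv β x)) volume :=
    key _ (((hu1.continuous.pow 2).div_const 2).mul
        ((hec.mul (hβ.continuous.inner hgψ)).sub (hφcc.mul (cont_vecDiv hβ))))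
      (fun x hx => by rw [h0 hx]; ring)
  have hintN : Integrable (fun x => ‖gradient u x‖ ^ 2) volume :=
    key _ (hgu.norm.pow 2) (fun x hx => by rw [gradient_zero_of_nmem hx]; simp)
  have hintE : Integrable (fun x => Real.exp (-ψ x) * u x ^ 2) volume :=
    key _ (hec.mul (hu1.continuous.pow 2)) (fun x hx => by rw [h0 hx]; ring)
  -- split the goal integral
  have hsplit : ∫ x, (Real.exp (-ψ x) + χ) * u x * (-ε * lap u x + ⟪β x, gradient u x⟫)
      = -ε * (∫ x, (Real.exp (-ψ x) + χ) * u x * lap u x)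
        + ∫ x, (Real.exp (-ψ x) + χ) * u x * ⟪β x, gradient u x⟫ := by
    have e : (fun x => (Real.exp (-ψ x) + χ) * u x * (-ε * lap u x + ⟪β x, gradient u x⟫))
        = fun x => -ε * ((Real.exp (-ψ x) + χ) * u x * lap u x)
          + (Real.exp (-ψ x) + χ) * u x * ⟪β x, gradient u x⟫ := by
      funext x; ring
    rw [e, integral_add (hintlap.const_mul _) hintconv, integral_const_mul]
  rw [hsplit, hI1, hI2]
  have hRHS : -ε * -(∫ x, ((Real.exp (-ψ x) + χ) * ‖gradient u x‖ ^ 2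
        - Real.exp (-ψ x) * u x * ⟪gradient ψ x, gradient u x⟫))
      + ∫ x, (u x ^ 2 / 2) * (Real.exp (-ψ x) * ⟪β x, gradient ψ x⟫
        - (Real.exp (-ψ x) + χ) * vecDiv β x)
      = ∫ x, (ε * ((Real.exp (-ψ x) + χ) * ‖gradient u x‖ ^ 2
          - Real.exp (-ψ x) * u x * ⟪gradient ψ x, gradient u x⟫)
        + (u x ^ 2 / 2) * (Real.exp (-ψ x) * ⟪β x, gradient ψ x⟫
          - (Real.exp (-ψ x) + χ) * vecDiv β x)) := by
    rw [integral_add (hintP1.const_mul ε) hintP2, integral_const_mul]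
    ring
  rw [hRHS]
  have hLHS : (χ / 2) * ε * (∫ x, ‖gradient u x‖ ^ 2)
      + (b₀ / 4) * ∫ x, Real.exp (-ψ x) * (u x) ^ 2
      = ∫ x, ((χ / 2) * ε * ‖gradient u x‖ ^ 2
          + (b₀ / 4) * (Real.exp (-ψ x) * u x ^ 2)) := by
    rw [integral_add (hintN.const_mul _) (hintE.const_mul _), integral_const_mul,
      integral_const_mul]
  rw [hLHS]
  refine integral_mono
    ((hintN.const_mul _).add (hintE.const_mul _))
    ((hintP1.const_mul ε).add hintP2) fun x => ?_
  simp only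
  by_cases hxΩ : x ∈ Ω
  · have ha : 0 < Real.exp (-ψ x) := Real.exp_pos _
    have hPle : |⟪gradient ψ x, gradient u x⟫| ≤ M * ‖gradient u x‖ := by
      refine (abs_real_inner_le_norm _ _).trans ?_
      exact mul_le_mul_of_nonneg_right (hψM x hxΩ) (norm_nonneg _)
    have hUP : |u x * ⟪gradient ψ x, gradient u x⟫| ≤ |u x| * (M * ‖gradient u x‖) := by
      rw [abs_mul]
      exact mul_le_mul_of_nonneg_left hPle (abs_nonneg _)
    have hEM : b₀ + 2 * E * M ^ 2 ≤ b₀ * χ := by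
      have h' := mul_le_mul_of_nonneg_left hχ hb₀.le
      have e : b₀ * (1 + 2 * b₀⁻¹ * E * M ^ 2) = b₀ + 2 * E * M ^ 2 := by
        field_simp
      linarith [e ▸ h']
    have hpt := pointwise_bound (Real.exp (-ψ x)) (‖gradient u x‖) (u x)
      (⟪gradient ψ x, gradient u x⟫) (⟪β x, gradient ψ x⟫) (vecDiv β x) ε χ M E b₀
      ha (hψE x hxΩ) (hβψ x hxΩ) (hdivβ x hxΩ) (norm_nonneg _)
      (abs_le.mp hUP).2 hb₀ hχ0 hEM hε0 hε1
    linarith [hpt]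
  · have hxS : x ∉ tsupport u := fun h => hxΩ (husupp h)
    rw [h0 hxS, gradient_zero_of_nmem hxS]
    simp
end

section
/- Let Ω ⊆ ℝ^d be open, let β : ℝ^d → ℝ^d be continuously differentiable with div β(x) ≤ 0 for all x ∈ Ω, let ψ : ℝ^d → ℝ be continuously differentiable, and let b₀ > 0, M ≥ 0, m > 0, E ≥ m be constants with ⟨β(x), ∇ψ(x)⟩ ≥ b₀, ‖∇ψ(x)‖ ≤ M, and m ≤ exp(−ψ(x)) ≤ E for all x ∈ Ω. Then there exists a constant C ≥ 0, depending only on b₀, M, m, E (and in particular independent of ε), such that for every ε with 0 < ε ≤ 1 and every twice continuously differentiable u : ℝ^d → ℝ whose support is compact and contained in Ω, setting f(x) = −ε·Δu(x) + ⟨β(x), ∇u(x)⟩, one has ε·∫_{ℝ^d} ‖∇u(x)‖² dx + ∫_{ℝ^d} u(x)² dx ≤ C·∫_{ℝ^d} f(x)² dx. -/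
open MeasureTheory
open scoped RealInnerProductSpace

section Infrastructure

lemma trace_clm {d : ℕ} (T : EuclideanSpace ℝ (Fin d) →L[ℝ] EuclideanSpace ℝ (Fin d)) :
    LinearMap.trace ℝ (EuclideanSpace ℝ (Fin d)) (T : _ →ₗ[ℝ] _) =
      ∑ i, T (EuclideanSpace.single i 1) i := by
  rw [LinearMap.trace_eq_matrix_trace ℝ (EuclideanSpace.basisFun (Fin d) ℝ).toBasis]
  unfold Matrix.trace
  apply Finset.sum_congr rfl
  intro i _
  rw [Matrix.diag_apply, LinearMap.toMatrix_apply]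
  simp [EuclideanSpace.basisFun_apply]

lemma vecDiv_eq {d : ℕ} (W : EuclideanSpace ℝ (Fin d) → EuclideanSpace ℝ (Fin d))
    (x : EuclideanSpace ℝ (Fin d)) :
    vecDiv W x = ∑ i, fderiv ℝ W x (EuclideanSpace.single i 1) i :=
  trace_clm _

lemma eucl_sum_single {d : ℕ} (w : EuclideanSpace ℝ (Fin d)) :
    ∑ i, w i • (EuclideanSpace.single i (1:ℝ)) = w := by
  ext j
  rw [WithLp.ofLp_sum, Finset.sum_apply]
  simp [EuclideanSpace.single_apply]

lemma clm_apply_eq_sum {d : ℕ} (L : EuclideanSpace ℝ (Fin d) →L[ℝ] ℝ)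
    (w : EuclideanSpace ℝ (Fin d)) :
    L w = ∑ i, w i * L (EuclideanSpace.single i 1) := by
  conv_lhs => rw [← eucl_sum_single w]
  rw [map_sum]
  simp [smul_eq_mul]

/-- product rule for the divergence -/
lemma vecDiv_smul {d : ℕ} {g : EuclideanSpace ℝ (Fin d) → ℝ}
    {V : EuclideanSpace ℝ (Fin d) → EuclideanSpace ℝ (Fin d)}
    {x : EuclideanSpace ℝ (Fin d)}
    (hg : DifferentiableAt ℝ g x) (hV : DifferentiableAt ℝ V x) :
    vecDiv (fun y => g y • V y) x = fderiv ℝ g x (V x) + g x * vecDiv V x := by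
  rw [vecDiv_eq, vecDiv_eq]
  rw [fderiv_fun_smul hg hV]
  rw [clm_apply_eq_sum (fderiv ℝ g x) (V x)]
  rw [Finset.mul_sum, ← Finset.sum_add_distrib]
  apply Finset.sum_congr rfl
  intro i _
  simp only [ContinuousLinearMap.add_apply, ContinuousLinearMap.coe_smul',
    Pi.smul_apply, ContinuousLinearMap.smulRight_apply]
  rw [PiLp.add_apply, PiLp.smul_apply, PiLp.smul_apply]
  simp only [smul_eq_mul]
  ring

lemma integral_fderiv_apply {d : ℕ} {h : EuclideanSpace ℝ (Fin d) → ℝ}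
    (hh : ContDiff ℝ 1 h) (hsupp : HasCompactSupport h)
    (v : EuclideanSpace ℝ (Fin d)) :
    ∫ x, fderiv ℝ h x v = 0 := by
  obtain ⟨C, hC⟩ := (HasCompactSupport.fderiv ℝ hsupp).exists_bound_of_continuous
    (hh.continuous_fderiv one_ne_zero)
  set K := Metric.cthickening ‖v‖ (tsupport h) with hKdef
  have hK : IsCompact K := hsupp.cthickening
  set bound : EuclideanSpace ℝ (Fin d) → ℝ := K.indicator (fun _ => C * ‖v‖) with hbdef
  have hdiff : ∀ (t : ℝ) (x : EuclideanSpace ℝ (Fin d)),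
      HasDerivAt (fun s => h (x + s • v)) (fderiv ℝ h (x + t • v) v) t := by
    intro t x
    have h1 : HasDerivAt (fun s : ℝ => x + s • v) v t := by
      simpa using ((hasDerivAt_id t).smul_const v).const_add x
    exact ((hh.differentiable one_ne_zero).differentiableAt.hasFDerivAt).comp_hasDerivAt t h1
  have key := hasDerivAt_integral_of_dominated_loc_of_deriv_le
    (F := fun t x => h (x + t • v)) (F' := fun t x => fderiv ℝ h (x + t • v) v)
    (x₀ := (0:ℝ)) (bound := bound) (μ := volume) (s := Metric.ball 0 1) (Metric.ball_mem_nhds 0 one_pos)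
    (Filter.Eventually.of_forall (fun t =>
      (show Continuous (fun x => h (x + t • v)) from
        hh.continuous.comp (continuous_id.add continuous_const)).aestronglyMeasurable))
    (by
      simpa using (hh.continuous.integrable_of_hasCompactSupport hsupp))
    (Continuous.aestronglyMeasurable (by
      exact ((hh.continuous_fderiv one_ne_zero).comp
        (continuous_id.add continuous_const)).clm_apply continuous_const))
    (Filter.Eventually.of_forall (fun x => by
      intro t ht
      by_cases hx : x ∈ K
      · rw [hbdef, Set.indicator_of_mem hx]
        calc ‖fderiv ℝ h (x + t • v) v‖ ≤ ‖fderiv ℝ h (x + t • v)‖ * ‖v‖ :=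
              (fderiv ℝ h (x + t • v)).le_opNorm v
        _ ≤ C * ‖v‖ := by
              exact mul_le_mul_of_nonneg_right (hC _) (norm_nonneg v)
      · rw [hbdef, Set.indicator_of_notMem hx]
        have hxs : x + t • v ∉ tsupport h := by
          intro hmem
          apply hx
          apply Metric.mem_cthickening_of_dist_le x (x + t • v) ‖v‖ (tsupport h) hmem
          rw [dist_eq_norm]
          simp only [Metric.mem_ball, Real.dist_eq, sub_zero] at ht
          have : x - (x + t • v) = -(t • v) := by abel
          rw [this, norm_neg, norm_smul, Real.norm_eq_abs]
          exact mul_le_of_le_one_left (norm_nonneg v) ht.le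
        have : fderiv ℝ h (x + t • v) = 0 := by
          have := support_fderiv_subset ℝ (f := h)
          by_contra hne
          exact hxs (this hne)
        simp [this]))
    (by
      rw [hbdef, integrable_indicator_iff hK.measurableSet]
      exact integrableOn_const hK.measure_lt_top.ne)
    (Filter.Eventually.of_forall (fun x => fun t _ => hdiff t x))
  have hconst : (fun t : ℝ => ∫ x, h (x + t • v)) = fun _ => ∫ x, h x := by
    funext t
    exact integral_add_right_eq_self h (t • v)
  have h0 : HasDerivAt (fun t : ℝ => ∫ x, h (x + t • v)) 0 0 := by
    rw [hconst]; exact hasDerivAt_const 0 _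
  have := key.2.unique h0
  simpa using this

lemma integral_vecDiv {d : ℕ} {W : EuclideanSpace ℝ (Fin d) → EuclideanSpace ℝ (Fin d)}
    (hW : ContDiff ℝ 1 W) (hsupp : HasCompactSupport W) :
    ∫ x, vecDiv W x = 0 := by
  have hint : ∀ i : Fin d, Integrable (fun x => fderiv ℝ W x (EuclideanSpace.single i 1) i) := by
    intro i
    apply Continuous.integrable_of_hasCompactSupport
    · exact (continuous_apply i).comp ((PiLp.continuous_ofLp (p := 2) (β := fun _ : Fin d => ℝ)).comp
        ((hW.continuous_fderiv one_ne_zero).clm_apply continuous_const))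
    · exact (HasCompactSupport.fderiv ℝ hsupp).comp_left (g := fun L :
        EuclideanSpace ℝ (Fin d) →L[ℝ] EuclideanSpace ℝ (Fin d) =>
        L (EuclideanSpace.single i 1) i) rfl
  calc ∫ x, vecDiv W x = ∫ x, ∑ i, fderiv ℝ W x (EuclideanSpace.single i 1) i := by
        simp_rw [vecDiv_eq]
    _ = ∑ i, ∫ x, fderiv ℝ W x (EuclideanSpace.single i 1) i :=
        integral_finset_sum _ (fun i _ => hint i)
    _ = 0 := by
        apply Finset.sum_eq_zero
        intro i _
        have hcomp : ∀ x, fderiv ℝ W x (EuclideanSpace.single i 1) i =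
            fderiv ℝ (fun y => W y i) x (EuclideanSpace.single i 1) := by
          intro x
          have : HasFDerivAt (fun y => W y i)
              ((EuclideanSpace.proj i (𝕜 := ℝ)).comp (fderiv ℝ W x)) x :=
            (EuclideanSpace.proj i (𝕜 := ℝ)).hasFDerivAt.comp x
              (hW.differentiable one_ne_zero x).hasFDerivAt
          rw [this.fderiv]
          rfl
        simp_rw [hcomp]
        apply integral_fderiv_apply
        · exact (EuclideanSpace.proj i (𝕜 := ℝ)).contDiff.comp hW
        · exact hsupp.comp_left (g := fun w : EuclideanSpace ℝ (Fin d) => w i) rfl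

lemma vecDiv_continuous {d : ℕ} {W : EuclideanSpace ℝ (Fin d) → EuclideanSpace ℝ (Fin d)}
    (hW : ContDiff ℝ 1 W) : Continuous (vecDiv W) := by
  have : vecDiv W = fun x => ∑ i, fderiv ℝ W x (EuclideanSpace.single i 1) i := by
    funext x; exact vecDiv_eq W x
  rw [this]
  exact continuous_finset_sum _ (fun i _ => (continuous_apply i).comp ((PiLp.continuous_ofLp (p := 2) (β := fun _ : Fin d => ℝ)).comp
    ((hW.continuous_fderiv one_ne_zero).clm_apply continuous_const)))

lemma vecDiv_compact_support {d : ℕ}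
    {W : EuclideanSpace ℝ (Fin d) → EuclideanSpace ℝ (Fin d)}
    (hsupp : HasCompactSupport W) : HasCompactSupport (vecDiv W) := by
  have : vecDiv W = (fun L : EuclideanSpace ℝ (Fin d) →L[ℝ] EuclideanSpace ℝ (Fin d) =>
      LinearMap.trace ℝ (EuclideanSpace ℝ (Fin d)) (L : _ →ₗ[ℝ] _)) ∘ (fderiv ℝ W) := rfl
  rw [this]
  exact (HasCompactSupport.fderiv ℝ hsupp).comp_left (by simp)

lemma vecDiv_integrable {d : ℕ}
    {W : EuclideanSpace ℝ (Fin d) → EuclideanSpace ℝ (Fin d)}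
    (hW : ContDiff ℝ 1 W) (hsupp : HasCompactSupport W) : Integrable (vecDiv W) :=
  (vecDiv_continuous hW).integrable_of_hasCompactSupport (vecDiv_compact_support hsupp)

end Infrastructure


set_option maxHeartbeats 1000000 in
/-- ε-uniform a priori stability of the convection-dominated diffusion problem:
there is a constant `C ≥ 0` depending only on `b₀, M, m, E` such that, under the
standing assumptions (`div β ≤ 0`, `⟨β, ∇ψ⟩ ≥ b₀ > 0`, `‖∇ψ‖ ≤ M`,
`m ≤ exp(−ψ) ≤ E` on `Ω`), for every `0 < ε ≤ 1` and every `C²` function `u`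
compactly supported in `Ω`, setting `f = −ε·Δu + ⟨β, ∇u⟩`, one has
`ε·∫ ‖∇u‖² + ∫ u² ≤ C·∫ f²`. -/
theorem convection_diffusion_stability
    (b₀ M m E : ℝ) (hb₀ : 0 < b₀) (hM : 0 ≤ M) (hm : 0 < m) (hmE : m ≤ E) :
    ∃ C : ℝ, 0 ≤ C ∧
      ∀ (d : ℕ) (Ω : Set (EuclideanSpace ℝ (Fin d)))
        (β : EuclideanSpace ℝ (Fin d) → EuclideanSpace ℝ (Fin d))
        (ψ : EuclideanSpace ℝ (Fin d) → ℝ),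
        IsOpen Ω → ContDiff ℝ 1 β → (∀ x ∈ Ω, vecDiv β x ≤ 0) →
        ContDiff ℝ 1 ψ →
        (∀ x ∈ Ω, b₀ ≤ ⟪β x, gradient ψ x⟫) →
        (∀ x ∈ Ω, ‖gradient ψ x‖ ≤ M) →
        (∀ x ∈ Ω, m ≤ Real.exp (-ψ x) ∧ Real.exp (-ψ x) ≤ E) →
        ∀ ε : ℝ, 0 < ε → ε ≤ 1 →
        ∀ u : EuclideanSpace ℝ (Fin d) → ℝ, ContDiff ℝ 2 u →
          HasCompactSupport u → tsupport u ⊆ Ω →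
          ε * (∫ x, ‖gradient u x‖ ^ 2) + (∫ x, (u x) ^ 2) ≤
            C * ∫ x, (-ε * lap u x + ⟪β x, gradient u x⟫) ^ 2 := by
  set l : ℝ := b₀ / (2 * (M ^ 2 + 1)) with hl_def
  have hl : 0 < l := by positivity
  set c : ℝ := l * b₀ / 4 with hc_def
  have hc : 0 < c := by positivity
  have hlM2 : l * M ^ 2 ≤ b₀ / 2 := by
    rw [hl_def, div_mul_eq_mul_div, div_le_div_iff₀ (by positivity) (by norm_num)]
    nlinarith [sq_nonneg M]
  have hl2M2 : l ^ 2 * M ^ 2 / 2 ≤ c := by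
    have h := mul_le_mul_of_nonneg_left hlM2 hl.le
    rw [hc_def]; nlinarith
  set mL : ℝ := m ^ l with hmL_def
  set EL : ℝ := E ^ l with hEL_def
  have hmL : 0 < mL := Real.rpow_pos_of_pos hm l
  have hEL : 0 < EL := Real.rpow_pos_of_pos (lt_of_lt_of_le hm hmE) l
  set K0 : ℝ := EL / (2 * c) with hK0_def
  have hK0 : 0 < K0 := by positivity
  have hmin : 0 < min 1 c := lt_min one_pos hc
  set c₁ : ℝ := (mL / 2) * min 1 c with hc1_def
  have hc₁ : 0 < c₁ := by positivity
  clear_value l c mL EL K0 c₁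
  refine ⟨K0 / c₁, le_of_lt (div_pos hK0 hc₁), ?_⟩
  intro d Ω β ψ hΩ hβ hΩdiv hψ hΩb₀ hΩM hΩmE ε hε hε1 u hu hcs hsupp
  have hu1 : ContDiff ℝ 1 u := hu.of_le (by norm_num)
  have hud : ∀ x, DifferentiableAt ℝ u x := fun x => (hu1.differentiable one_ne_zero).differentiableAt
  have hψd : ∀ x, DifferentiableAt ℝ ψ x := fun x => (hψ.differentiable one_ne_zero).differentiableAt
  have hβd : ∀ x, DifferentiableAt ℝ β x := fun x => (hβ.differentiable one_ne_zero).differentiableAt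
  have hgrad : ∀ (g : EuclideanSpace ℝ (Fin d) → ℝ) (x w : EuclideanSpace ℝ (Fin d)),
      ⟪gradient g x, w⟫ = fderiv ℝ g x w := by
    intro g x w
    unfold gradient
    exact InnerProductSpace.toDual_symm_apply
  -- the gradient of u as a C¹ compactly supported vector field
  have hG : ContDiff ℝ 1 (fun y => gradient u y) := by
    have h1 : ContDiff ℝ 1 (fderiv ℝ u) := hu.fderiv_right (by norm_num)
    exact ((InnerProductSpace.toDual ℝ
      (EuclideanSpace ℝ (Fin d))).symm.contDiff).comp h1
  have hGsupp : HasCompactSupport (fun y => gradient u y) :=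
    (HasCompactSupport.fderiv ℝ hcs).comp_left
      (g := fun L : EuclideanSpace ℝ (Fin d) →L[ℝ] ℝ =>
        (InnerProductSpace.toDual ℝ (EuclideanSpace ℝ (Fin d))).symm L) (map_zero _)
  have hGcont : Continuous (fun y => gradient u y) := hG.continuous
  have hgradψ_cont : Continuous (fun y => gradient ψ y) := by
    have h1 : Continuous (fderiv ℝ ψ) := hψ.continuous_fderiv one_ne_zero
    exact ((InnerProductSpace.toDual ℝ
      (EuclideanSpace ℝ (Fin d))).symm.continuous).comp h1
  have hlap_cont : Continuous (lap u) := vecDiv_continuous hG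
  have hlap_supp : HasCompactSupport (lap u) := vecDiv_compact_support hGsupp
  -- the weight
  set φ : EuclideanSpace ℝ (Fin d) → ℝ := fun y => Real.exp (-l * ψ y) with hφ_def
  have hφpos : ∀ x, 0 < φ x := fun x => Real.exp_pos _
  have hφC : ContDiff ℝ 1 φ := Real.contDiff_exp.comp (contDiff_const.mul hψ)
  have hφfd : ∀ x, HasFDerivAt φ (φ x • ((-l) • fderiv ℝ ψ x)) x := fun x => by
    have := (Real.hasDerivAt_exp (-l * ψ x)).comp_hasFDerivAt x ((hψd x).hasFDerivAt.const_mul (-l))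
    exact this
  have hφm : ∀ x ∈ Ω, mL ≤ φ x := by
    intro x hx
    rw [hφ_def]
    show mL ≤ Real.exp (-l * ψ x)
    rw [show -l * ψ x = -ψ x * l by ring, Real.exp_mul, hmL_def]
    exact Real.rpow_le_rpow hm.le (hΩmE x hx).1 hl.le
  have hφE : ∀ x ∈ Ω, φ x ≤ EL := by
    intro x hx
    rw [hφ_def]
    show Real.exp (-l * ψ x) ≤ EL
    rw [show -l * ψ x = -ψ x * l by ring, Real.exp_mul, hEL_def]
    exact Real.rpow_le_rpow (Real.exp_pos _).le (hΩmE x hx).2 hl.le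
  -- the right-hand side
  set fF : EuclideanSpace ℝ (Fin d) → ℝ :=
    fun x => -ε * lap u x + ⟪β x, gradient u x⟫ with hfF_def
  have hfF_cont : Continuous fF :=
    (continuous_const.mul hlap_cont).add (hβ.continuous.inner hGcont)
  have hfF_supp : HasCompactSupport fF := by
    apply HasCompactSupport.add
    · exact hlap_supp.mul_left
    · apply HasCompactSupport.mono hGsupp
      intro x hx
      simp only [Function.mem_support, ne_eq] at hx ⊢
      intro h0
      apply hx
      rw [h0]
      exact inner_zero_right _
  -- vanishing outside Ω
  have hout : ∀ x, x ∉ Ω → u x = 0 ∧ gradient u x = 0 ∧ lap u x = 0 := by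
    intro x hx
    have hxt : x ∉ tsupport u := fun h => hx (hsupp h)
    have hg0 : ∀ y, y ∉ tsupport u → gradient u y = 0 := by
      intro y hy
      rw [notMem_tsupport_iff_eventuallyEq] at hy
      have hf : fderiv ℝ u y = 0 := by
        rw [hy.fderiv_eq]; exact fderiv_const_apply 0
      unfold gradient
      rw [hf, map_zero]
    refine ⟨image_eq_zero_of_notMem_tsupport hxt, hg0 x hxt, ?_⟩
    have hopen : IsOpen (tsupport u)ᶜ := (isClosed_tsupport u).isOpen_compl
    have hev : (fun y => gradient u y) =ᶠ[nhds x] (fun _ => (0 : EuclideanSpace ℝ (Fin d))) := by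
      filter_upwards [hopen.mem_nhds hxt] with y hy
      exact hg0 y hy
    have hf0 : fderiv ℝ (fun y => gradient u y) x = 0 := by
      rw [hev.fderiv_eq]
      exact fderiv_const_apply _
    show lap u x = 0
    rw [show lap u x = vecDiv (fun y => gradient u y) x from rfl, vecDiv_eq, hf0]
    simp
  -- the two auxiliary vector fields
  set g₁ : EuclideanSpace ℝ (Fin d) → ℝ := fun y => (1/2 : ℝ) * (φ y * (u y * u y))
    with hg₁_def
  set g₂ : EuclideanSpace ℝ (Fin d) → ℝ := fun y => ε * (φ y * u y) with hg₂_def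
  have hg₁fd : ∀ x, HasFDerivAt g₁ ((1/2 : ℝ) •
      (φ x • ((u x) • fderiv ℝ u x + (u x) • fderiv ℝ u x) +
        (u x * u x) • (φ x • ((-l) • fderiv ℝ ψ x)))) x := fun x =>
    ((hφfd x).mul (((hud x).hasFDerivAt).mul ((hud x).hasFDerivAt))).const_mul (1/2)
  have hg₂fd : ∀ x, HasFDerivAt g₂ (ε •
      (φ x • fderiv ℝ u x + (u x) • (φ x • ((-l) • fderiv ℝ ψ x)))) x := fun x =>
    ((hφfd x).mul ((hud x).hasFDerivAt)).const_mul ε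
  have hg₁C : ContDiff ℝ 1 g₁ := contDiff_const.mul (hφC.mul (hu1.mul hu1))
  have hg₂C : ContDiff ℝ 1 g₂ := contDiff_const.mul (hφC.mul hu1)
  have hW₁C : ContDiff ℝ 1 (fun y => g₁ y • β y) := hg₁C.smul hβ
  have hW₂C : ContDiff ℝ 1 (fun y => g₂ y • gradient u y) := hg₂C.smul hG
  have hW₁supp : HasCompactSupport (fun y => g₁ y • β y) := by
    apply HasCompactSupport.mono hcs
    intro x hx
    simp only [Function.mem_support, ne_eq] at hx ⊢
    intro h0
    apply hx
    rw [hg₁_def]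
    simp [h0]
  have hW₂supp : HasCompactSupport (fun y => g₂ y • gradient u y) := by
    apply HasCompactSupport.mono hcs
    intro x hx
    simp only [Function.mem_support, ne_eq] at hx ⊢
    intro h0
    apply hx
    rw [hg₂_def]
    simp [h0]
  have hI₁ : ∫ x, vecDiv (fun y => g₁ y • β y) x = 0 := integral_vecDiv hW₁C hW₁supp
  have hI₂ : ∫ x, vecDiv (fun y => g₂ y • gradient u y) x = 0 := integral_vecDiv hW₂C hW₂supp
  -- the "reaction" function obtained after integration by parts
  set Rf : EuclideanSpace ℝ (Fin d) → ℝ := fun x =>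
    ε * (φ x * ‖gradient u x‖ ^ 2)
      - (ε * l) * (φ x * (u x * ⟪gradient ψ x, gradient u x⟫))
      + (l / 2) * (φ x * (u x ^ 2 * ⟪β x, gradient ψ x⟫))
      - (φ x * u x ^ 2 / 2) * vecDiv β x with hRf_def
  -- pointwise identity
  have hptD : ∀ x, fF x * (φ x * u x) - Rf x =
      vecDiv (fun y => g₁ y • β y) x - vecDiv (fun y => g₂ y • gradient u y) x := by
    intro x
    rw [vecDiv_smul (hg₁fd x).differentiableAt (hβd x),
        vecDiv_smul (hg₂fd x).differentiableAt ((hG.differentiable one_ne_zero).differentiableAt),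
        (hg₁fd x).fderiv, (hg₂fd x).fderiv]
    have hlapx : vecDiv (fun y => gradient u y) x = lap u x := rfl
    have e1 : ⟪β x, gradient u x⟫ = fderiv ℝ u x (β x) := by
      rw [real_inner_comm]; exact hgrad u x (β x)
    have e2 : ⟪gradient ψ x, gradient u x⟫ = fderiv ℝ ψ x (gradient u x) := hgrad ψ x _
    have e3 : ⟪β x, gradient ψ x⟫ = fderiv ℝ ψ x (β x) := by
      rw [real_inner_comm]; exact hgrad ψ x (β x)
    have e4 : ‖gradient u x‖ ^ 2 = fderiv ℝ u x (gradient u x) := by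
      rw [← real_inner_self_eq_norm_sq]; exact hgrad u x _
    rw [hRf_def, hfF_def, hg₁_def, hg₂_def]
    simp only [ContinuousLinearMap.add_apply, ContinuousLinearMap.coe_smul',
      Pi.smul_apply, smul_eq_mul]
    rw [hlapx, e1, e2, e3, e4]
    ring
  clear_value φ fF Rf g₁ g₂
  -- integrability facts
  have iP : Integrable (fun x => fF x * (φ x * u x)) := by
    apply Continuous.integrable_of_hasCompactSupport
    · exact hfF_cont.mul (hφC.continuous.mul hu1.continuous)
    · apply HasCompactSupport.mono hcs
      intro x hx
      simp only [Function.mem_support, ne_eq] at hx ⊢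
      intro h0; apply hx; simp [h0]
  have iR1 : Integrable (fun x => φ x * ‖gradient u x‖ ^ 2) := by
    apply Continuous.integrable_of_hasCompactSupport
    · exact hφC.continuous.mul (hGcont.norm.pow 2)
    · apply HasCompactSupport.mono hGsupp
      intro x hx
      simp only [Function.mem_support, ne_eq] at hx ⊢
      intro h0; apply hx; simp [h0]
  have iR2 : Integrable (fun x => φ x * (u x * ⟪gradient ψ x, gradient u x⟫)) := by
    apply Continuous.integrable_of_hasCompactSupport
    · exact hφC.continuous.mul (hu1.continuous.mul (hgradψ_cont.inner hGcont))
    · apply HasCompactSupport.mono hcs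
      intro x hx
      simp only [Function.mem_support, ne_eq] at hx ⊢
      intro h0; apply hx; simp [h0]
  have iR3 : Integrable (fun x => φ x * (u x ^ 2 * ⟪β x, gradient ψ x⟫)) := by
    apply Continuous.integrable_of_hasCompactSupport
    · exact hφC.continuous.mul ((hu1.continuous.pow 2).mul (hβ.continuous.inner hgradψ_cont))
    · apply HasCompactSupport.mono hcs
      intro x hx
      simp only [Function.mem_support, ne_eq] at hx ⊢
      intro h0; apply hx; simp [h0]
  have iR4 : Integrable (fun x => (φ x * u x ^ 2 / 2) * vecDiv β x) := by
    apply Continuous.integrable_of_hasCompactSupport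
    · exact ((hφC.continuous.mul (hu1.continuous.pow 2)).div_const 2).mul (vecDiv_continuous hβ)
    · apply HasCompactSupport.mono hcs
      intro x hx
      simp only [Function.mem_support, ne_eq] at hx ⊢
      intro h0; apply hx; simp [h0]
  have iR : Integrable Rf := by
    rw [hRf_def]
    exact (((iR1.const_mul ε).sub (iR2.const_mul (ε * l))).add
      (iR3.const_mul (l / 2))).sub iR4
  have i_u2 : Integrable (fun x => u x ^ 2) := by
    apply Continuous.integrable_of_hasCompactSupport
    · exact hu1.continuous.pow 2
    · exact hcs.comp_left (g := fun t : ℝ => t ^ 2) (by norm_num)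
  have i_norm2 : Integrable (fun x => ‖gradient u x‖ ^ 2) := by
    apply Continuous.integrable_of_hasCompactSupport
    · exact hGcont.norm.pow 2
    · exact hGsupp.comp_left (g := fun w : EuclideanSpace ℝ (Fin d) => ‖w‖ ^ 2) (by norm_num)
  have i_phiu2 : Integrable (fun x => φ x * u x ^ 2) := by
    apply Continuous.integrable_of_hasCompactSupport
    · exact hφC.continuous.mul (hu1.continuous.pow 2)
    · apply HasCompactSupport.mono hcs
      intro x hx
      simp only [Function.mem_support, ne_eq] at hx ⊢
      intro h0; apply hx; simp [h0]
  have i_f2 : Integrable (fun x => fF x ^ 2) := by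
    apply Continuous.integrable_of_hasCompactSupport
    · exact hfF_cont.pow 2
    · exact hfF_supp.comp_left (g := fun t : ℝ => t ^ 2) (by norm_num)
  -- the integral identity
  have claim1 : ∫ x, fF x * (φ x * u x) = ∫ x, Rf x := by
    have h1 : ∫ x, (fF x * (φ x * u x) - Rf x) = 0 := by
      have heq : (fun x => fF x * (φ x * u x) - Rf x) =
          fun x => vecDiv (fun y => g₁ y • β y) x - vecDiv (fun y => g₂ y • gradient u y) x :=
        funext hptD
      rw [heq, integral_sub (vecDiv_integrable hW₁C hW₁supp) (vecDiv_integrable hW₂C hW₂supp),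
        hI₁, hI₂, sub_zero]
    have h2 := integral_sub iP iR
    rw [h2] at h1
    linarith
  -- pointwise lower bound for Rf
  have hpt1 : ∀ x, ε / 2 * (φ x * ‖gradient u x‖ ^ 2) + c * (φ x * u x ^ 2) ≤ Rf x := by
    intro x
    by_cases hx : x ∈ Ω
    · have hb := hΩb₀ x hx
      have hdv := hΩdiv x hx
      have hMx := hΩM x hx
      have hφ0 := hφpos x
      have ha : (0:ℝ) ≤ ‖gradient u x‖ := norm_nonneg _
      have habs : |⟪gradient ψ x, gradient u x⟫| ≤ M * ‖gradient u x‖ :=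
        le_trans (abs_real_inner_le_norm _ _) (mul_le_mul_of_nonneg_right hMx ha)
      have hUI2 : u x * ⟪gradient ψ x, gradient u x⟫ ≤ |u x| * (M * ‖gradient u x‖) := by
        calc u x * ⟪gradient ψ x, gradient u x⟫ ≤ |u x * ⟪gradient ψ x, gradient u x⟫| :=
              le_abs_self _
        _ = |u x| * |⟪gradient ψ x, gradient u x⟫| := abs_mul _ _
        _ ≤ |u x| * (M * ‖gradient u x‖) := mul_le_mul_of_nonneg_left habs (abs_nonneg _)
      have key : ε / 2 * ‖gradient u x‖ ^ 2 + c * u x ^ 2 ≤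
          ε * ‖gradient u x‖ ^ 2 - (ε * l) * (|u x| * (M * ‖gradient u x‖))
            + (l / 2) * (u x ^ 2 * b₀) := by
        have hεlM : ε / 2 * (l ^ 2 * M ^ 2) ≤ c := by
          nlinarith [hl2M2, hε1, hε.le, sq_nonneg (l * M)]
        nlinarith [mul_nonneg hε.le (sq_nonneg (‖gradient u x‖ - l * M * |u x|)),
          mul_nonneg (sub_nonneg.2 hεlM) (sq_nonneg (u x)), sq_abs (u x), hc_def]
      have KEY := mul_le_mul_of_nonneg_left key hφ0.le
      have T2 : (ε * l) * (φ x * (u x * ⟪gradient ψ x, gradient u x⟫)) ≤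
          (ε * l) * (φ x * (|u x| * (M * ‖gradient u x‖))) := by
        apply mul_le_mul_of_nonneg_left _ (by positivity)
        exact mul_le_mul_of_nonneg_left hUI2 hφ0.le
      have T3 : (l / 2) * (φ x * (u x ^ 2 * b₀)) ≤
          (l / 2) * (φ x * (u x ^ 2 * ⟪β x, gradient ψ x⟫)) := by
        apply mul_le_mul_of_nonneg_left _ (by positivity)
        apply mul_le_mul_of_nonneg_left _ hφ0.le
        exact mul_le_mul_of_nonneg_left hb (sq_nonneg (u x))
      have T4 : (φ x * u x ^ 2 / 2) * vecDiv β x ≤ 0 :=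
        mul_nonpos_of_nonneg_of_nonpos (by positivity) hdv
      rw [hRf_def]
      linarith [KEY, T2, T3, T4]
    · obtain ⟨h0u, h0g, h0l⟩ := hout x hx
      rw [hRf_def]
      simp [h0u, h0g]
  -- pointwise upper bound for the pairing
  have hpt2 : ∀ x, fF x * (φ x * u x) ≤ K0 * fF x ^ 2 + c / 2 * (φ x * u x ^ 2) := by
    intro x
    by_cases hx : x ∈ Ω
    · have hφ0 := hφpos x
      have hφEx := hφE x hx
      have hK0E : 2 * c * K0 = EL := by
        rw [hK0_def]; field_simp
      have h2c : (0:ℝ) < 2 * c := by positivity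
      have hEK : (2 * c * K0) * fF x ^ 2 = EL * fF x ^ 2 := by rw [hK0E]
      apply le_of_mul_le_mul_left _ h2c
      nlinarith [mul_nonneg hφ0.le (sq_nonneg (fF x - c * u x)),
        mul_nonneg (sub_nonneg.2 hφEx) (sq_nonneg (fF x)), hEK]
    · obtain ⟨h0u, h0g, h0l⟩ := hout x hx
      have hfF0 : fF x = 0 := by
        rw [hfF_def]
        simp [h0l, h0g]
      rw [hfF0, h0u]
      simp
  -- pointwise weight bounds
  have hpt3 : ∀ x, mL * ‖gradient u x‖ ^ 2 ≤ φ x * ‖gradient u x‖ ^ 2 := by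
    intro x
    by_cases hx : x ∈ Ω
    · exact mul_le_mul_of_nonneg_right (hφm x hx) (sq_nonneg _)
    · rw [(hout x hx).2.1]; simp
  have hpt4 : ∀ x, mL * u x ^ 2 ≤ φ x * u x ^ 2 := by
    intro x
    by_cases hx : x ∈ Ω
    · exact mul_le_mul_of_nonneg_right (hφm x hx) (sq_nonneg _)
    · rw [(hout x hx).1]; simp
  -- assembling the integral inequalities
  have eS : ∫ x, (ε / 2 * (φ x * ‖gradient u x‖ ^ 2) + c * (φ x * u x ^ 2)) =
      ε / 2 * (∫ x, φ x * ‖gradient u x‖ ^ 2) + c * (∫ x, φ x * u x ^ 2) := by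
    rw [integral_add (iR1.const_mul _) (i_phiu2.const_mul _), integral_const_mul,
      integral_const_mul]
  have eT : ∫ x, (K0 * fF x ^ 2 + c / 2 * (φ x * u x ^ 2)) =
      K0 * (∫ x, fF x ^ 2) + c / 2 * (∫ x, φ x * u x ^ 2) := by
    rw [integral_add (i_f2.const_mul _) (i_phiu2.const_mul _), integral_const_mul,
      integral_const_mul]
  have m1 : ∫ x, (ε / 2 * (φ x * ‖gradient u x‖ ^ 2) + c * (φ x * u x ^ 2)) ≤ ∫ x, Rf x :=
    integral_mono ((iR1.const_mul _).add (i_phiu2.const_mul _)) iR (fun x => hpt1 x)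
  have m2 : ∫ x, fF x * (φ x * u x) ≤ ∫ x, (K0 * fF x ^ 2 + c / 2 * (φ x * u x ^ 2)) :=
    integral_mono iP ((i_f2.const_mul _).add (i_phiu2.const_mul _)) (fun x => hpt2 x)
  have main1 : ε / 2 * (∫ x, φ x * ‖gradient u x‖ ^ 2) + c / 2 * (∫ x, φ x * u x ^ 2) ≤
      K0 * (∫ x, fF x ^ 2) := by
    rw [eS] at m1
    rw [eT] at m2
    rw [claim1] at m2
    linarith
  have mono3 : mL * (∫ x, ‖gradient u x‖ ^ 2) ≤ ∫ x, φ x * ‖gradient u x‖ ^ 2 := by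
    rw [← integral_const_mul]
    exact integral_mono (i_norm2.const_mul mL) iR1 (fun x => hpt3 x)
  have mono4 : mL * (∫ x, u x ^ 2) ≤ ∫ x, φ x * u x ^ 2 := by
    rw [← integral_const_mul]
    exact integral_mono (i_u2.const_mul mL) i_phiu2 (fun x => hpt4 x)
  have hB1 : 0 ≤ ∫ x, ‖gradient u x‖ ^ 2 := integral_nonneg (fun x => sq_nonneg _)
  have hB2 : 0 ≤ ∫ x, u x ^ 2 := integral_nonneg (fun x => sq_nonneg _)
  have hA3 : 0 ≤ ∫ x, fF x ^ 2 := integral_nonneg (fun x => sq_nonneg _)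
  have hstep : c₁ * (ε * (∫ x, ‖gradient u x‖ ^ 2) + (∫ x, u x ^ 2)) ≤
      K0 * (∫ x, fF x ^ 2) := by
    have h1 : ε / 2 * (mL * (∫ x, ‖gradient u x‖ ^ 2)) ≤
        ε / 2 * (∫ x, φ x * ‖gradient u x‖ ^ 2) :=
      mul_le_mul_of_nonneg_left mono3 (by positivity)
    have h2 : c / 2 * (mL * (∫ x, u x ^ 2)) ≤ c / 2 * (∫ x, φ x * u x ^ 2) :=
      mul_le_mul_of_nonneg_left mono4 (by positivity)
    have h3 : c₁ ≤ mL / 2 := by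
      rw [hc1_def]
      nlinarith [min_le_left 1 c, hmL]
    have h4 : c₁ ≤ c * (mL / 2) := by
      rw [hc1_def]
      nlinarith [min_le_right 1 c, hmL]
    linarith [h1, h2, main1,
      mul_le_mul_of_nonneg_right h3 (mul_nonneg hε.le hB1),
      mul_le_mul_of_nonneg_right h4 hB2]
  have hfFx : ∀ x, -ε * lap u x + ⟪β x, gradient u x⟫ = fF x := fun x => by rw [hfF_def]
  simp_rw [hfFx]
  rw [div_mul_eq_mul_div, le_div_iff₀ hc₁]
  linarith [hstep]
end
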